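/- arXiv:1107.3343 — 2 statements merged into one kernel-verified Lean document; each statement's English description precedes it below -/
import Mathlib

section
/- Let (M,π) be a Poisson manifold. The bracket [α,β]_π = L_{π^♯α} β − L_{π^♯β} α − d(π(α,β)) on 1-forms, together with anchor π^♯ : T*M → TM, makes T*M into a Lie algebroid: [·,·]_π is a Lie bracket on Ω¹(M), and the Leibniz rule [α, fβ]_π = f[α,β]_π + (L_{π^♯α} f) β holds. -/
/-!
Algebraic model of a smooth manifold `M`: `R` is its commutative `ℝ`-algebra of
smooth functions `C^∞(M)`, vector fields are derivations of `R` (with the usual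
Lie bracket of vector fields given by the commutator), `1`-forms are `R`-linear
functionals on vector fields, and `2`-forms are skew-symmetric `R`-bilinear
forms on vector fields.  Exterior derivatives, Lie derivatives and interior
products are given by the usual Cartan formulas.
-/

variable {R : Type*} [CommRing R] [Algebra ℝ R]

/-- Vector fields on `M`. -/
abbrev Vec (R : Type*) [CommRing R] [Algebra ℝ R] := Derivation ℝ R R

/-- `1`-forms on `M`. -/
abbrev Form1 (R : Type*) [CommRing R] [Algebra ℝ R] := Vec R →ₗ[R] R

/-- The Courant bracket `⟦(X,α),(Y,β)⟧ = ([X,Y], L_X β − i_Y dα)` on sections of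
`𝕋M = TM ⊕ T*M`, written out pointwise via the Cartan formulas
`(L_X β)(Z) = X(β(Z)) − β([X,Z])` and `dα(Y,Z) = Y(α(Z)) − Z(α(Y)) − α([Y,Z])`. -/
def Cour (p q : Vec R × (Vec R → R)) : Vec R × (Vec R → R) :=
  (⁅p.1, q.1⁆,
    fun Z => p.1 (q.2 Z) - q.2 ⁅p.1, Z⁆ -
      (q.1 (p.2 Z) - Z (p.2 q.1) - p.2 ⁅q.1, Z⁆))

/-- The exterior derivative of a `2`-form `B` (given via `B^♯ : X ↦ B(X,·)`),
evaluated on vector fields `X, Y, Z` by the Cartan formula. -/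
def dCartan (B : Vec R →ₗ[R] Form1 R) (X Y Z : Vec R) : R :=
  X (B Y Z) - Y (B X Z) + Z (B X Y) -
    B ⁅X, Y⁆ Z + B ⁅X, Z⁆ Y - B ⁅Y, Z⁆ X

/-- The differential of a function: `df(X) = X(f)`. -/
def dR (f : R) : Form1 R where
  toFun X := X f
  map_add' X Y := rfl
  map_smul' c X := rfl

lemma lie_smul' (f : R) (X Y : Vec R) : ⁅X, f • Y⁆ = f • ⁅X, Y⁆ + X f • Y := by
  ext g
  simp [Derivation.commutator_apply, Derivation.leibniz, smul_eq_mul]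

/-- The Lie derivative of a `1`-form: `(L_X β)(Y) = X(β(Y)) − β([X,Y])`. -/
def lieD (X : Vec R) (β : Form1 R) : Form1 R where
  toFun Y := X (β Y) - β ⁅X, Y⁆
  map_add' Y Z := by simp; ring
  map_smul' c Y := by
    simp [lie_smul', smul_eq_mul, Derivation.leibniz]
    ring

/-- The Koszul bracket of `1`-forms on a Poisson manifold:
`[α,β]_π = L_{π^♯α} β − L_{π^♯β} α − d(π(α,β))`, where `π(α,β) = β(π^♯ α)`. -/
def brP (p : Form1 R →ₗ[R] Vec R) (α β : Form1 R) : Form1 R :=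
  lieD (p α) β - lieD (p β) α - dR (β (p α))

/-- The bracket `{f,g} = π(df,dg)` of functions induced by the bivector. -/
def poissonBr (p : Form1 R →ₗ[R] Vec R) (f g : R) : R := p (dR f) g


lemma dR_apply' {R : Type*} [CommRing R] [Algebra ℝ R] (f : R) (X : Vec R) :
    dR f X = X f := rfl

lemma lieD_apply' {R : Type*} [CommRing R] [Algebra ℝ R]
    (X : Vec R) (β : Form1 R) (Y : Vec R) :
    lieD X β Y = X (β Y) - β ⁅X, Y⁆ := rfl

/-- Hamiltonian vector fields: `[X_f, X_g] = X_{{f,g}}`. -/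
lemma ham_bracket {R : Type*} [CommRing R] [Algebra ℝ R] (p : Form1 R →ₗ[R] Vec R)
    (hp : ∀ α β : Form1 R, β (p α) = - α (p β))
    (hJac : ∀ f g h : R,
      poissonBr p f (poissonBr p g h) + poissonBr p g (poissonBr p h f) +
        poissonBr p h (poissonBr p f g) = 0) (f g : R) :
    ⁅p (dR f), p (dR g)⁆ = p (dR (p (dR f) g)) := by
  ext h
  have j := hJac f g h
  simp only [poissonBr] at j
  have hB : p (dR g) (p (dR h) f) = - p (dR g) (p (dR f) h) := by
    rw [show p (dR h) f = -(p (dR f) h) from hp (dR h) (dR f), map_neg]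
  have hC : p (dR (p (dR f) g)) h = - p (dR h) (p (dR f) g) :=
    hp (dR (p (dR f) g)) (dR h)
  rw [Derivation.commutator_apply]
  linear_combination j - hB - hC

/-- `[π^♯α, X_f] = -π^♯(L_{X_f} α)`. -/
lemma lemA' {R : Type*} [CommRing R] [Algebra ℝ R] (p : Form1 R →ₗ[R] Vec R)
    (hp : ∀ α β : Form1 R, β (p α) = - α (p β))
    (hJac : ∀ f g h : R,
      poissonBr p f (poissonBr p g h) + poissonBr p g (poissonBr p h f) +
        poissonBr p h (poissonBr p f g) = 0) (α : Form1 R) (f : R) :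
    ⁅p α, p (dR f)⁆ = - p (lieD (p (dR f)) α) := by
  ext g
  rw [Derivation.commutator_apply, Derivation.neg_apply]
  have e1 : p α (p (dR f) g) = -α (p (dR (p (dR f) g))) := hp α (dR (p (dR f) g))
  have e2 : p (dR (p (dR f) g)) = ⁅p (dR f), p (dR g)⁆ :=
    (ham_bracket p hp hJac f g).symm
  have e3 : p α g = -α (p (dR g)) := hp α (dR g)
  have e4 : p (lieD (p (dR f)) α) g = -(lieD (p (dR f)) α) (p (dR g)) :=
    hp (lieD (p (dR f)) α) (dR g)
  rw [e1, e2, e3, map_neg, e4, lieD_apply']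
  ring

/-- The anchor identity: `π^♯[α,β]_π = [π^♯α, π^♯β]`. -/
lemma anchorP {R : Type*} [CommRing R] [Algebra ℝ R] (p : Form1 R →ₗ[R] Vec R)
    (hp : ∀ α β : Form1 R, β (p α) = - α (p β))
    (hJac : ∀ f g h : R,
      poissonBr p f (poissonBr p g h) + poissonBr p g (poissonBr p h f) +
        poissonBr p h (poissonBr p f g) = 0) (α β : Form1 R) :
    p (brP p α β) = ⁅p α, p β⁆ := by
  ext f
  have e0 : p (brP p α β) f = -(brP p α β) (p (dR f)) := hp (brP p α β) (dR f)
  rw [e0, Derivation.commutator_apply]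
  have fA : α ⁅p β, p (dR f)⁆ =
      p (dR f) (β (p α)) - β ⁅p (dR f), p α⁆ := by
    rw [lemA' p hp hJac β f, map_neg,
      show α (p (lieD (p (dR f)) β)) = -(lieD (p (dR f)) β) (p α) from
        hp (lieD (p (dR f)) β) α, lieD_apply']
    ring
  have fC : β ⁅p (dR f), p α⁆ = -β ⁅p α, p (dR f)⁆ := by
    rw [← lie_skew, map_neg]
  have g1 : p α (p β f) = - p α (β (p (dR f))) := by
    rw [show p β f = -β (p (dR f)) from hp β (dR f), map_neg]
  have g2 : p β (p α f) = - p β (α (p (dR f))) := by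
    rw [show p α f = -α (p (dR f)) from hp α (dR f), map_neg]
  simp only [brP, LinearMap.sub_apply, lieD_apply', dR_apply']
  linear_combination -fA + fC - g1 + g2

/-- Let `(M,π)` be a Poisson manifold (the skew map `π^♯ : T*M → TM` with
`{·,·}` satisfying the Jacobi identity).  The bracket
`[α,β]_π = L_{π^♯α} β − L_{π^♯β} α − d(π(α,β))` on `1`-forms, together with the
anchor `π^♯ : T*M → TM`, makes `T*M` into a Lie algebroid: `[·,·]_π` is a Lie
bracket on `Ω¹(M)` (skew-symmetric and satisfying the Jacobi identity), and the
Leibniz rule `[α, fβ]_π = f[α,β]_π + (L_{π^♯α} f) β` holds. -/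
theorem cotangent_lie_algebroid
    (p : Form1 R →ₗ[R] Vec R)
    (hp : ∀ α β : Form1 R, β (p α) = - α (p β))
    (hJac : ∀ f g h : R,
      poissonBr p f (poissonBr p g h) + poissonBr p g (poissonBr p h f) +
        poissonBr p h (poissonBr p f g) = 0) :
    (∀ α β : Form1 R, brP p α β = - brP p β α) ∧
    (∀ α β γ : Form1 R,
        brP p α (brP p β γ) + brP p β (brP p γ α) + brP p γ (brP p α β) = 0) ∧
    (∀ (α : Form1 R) (f : R) (β : Form1 R),
        brP p α (f • β) = f • brP p α β + p α f • β) := by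
  have anchor := anchorP p hp hJac
  refine ⟨?_, ?_, ?_⟩
  · intro α β
    apply LinearMap.ext; intro Z
    have hz : Z (β (p α)) = - Z (α (p β)) := by rw [hp α β, map_neg]
    simp only [brP, LinearMap.sub_apply, LinearMap.neg_apply, lieD_apply', dR_apply']
    linear_combination -hz
  · intro α β γ
    have e1 : ∀ α' β' γ' : Form1 R, brP p α' (brP p β' γ') =
        lieD (p α') (brP p β' γ') - lieD ⁅p β', p γ'⁆ α' - dR ((brP p β' γ') (p α')) := by
      intro α' β' γ'
      rw [show brP p α' (brP p β' γ') = lieD (p α') (brP p β' γ') -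
        lieD (p (brP p β' γ')) α' - dR ((brP p β' γ') (p α')) from rfl, anchor β' γ']
    rw [e1 α β γ, e1 β γ α, e1 γ α β]
    apply LinearMap.ext; intro Z
    have h1 : Z (p α (γ (p β))) = - Z (p α (β (p γ))) := by
      rw [hp β γ, map_neg, map_neg]
    have h2 : Z (p β (α (p γ))) = - Z (p β (γ (p α))) := by
      rw [hp γ α, map_neg, map_neg]
    have h3 : Z (p γ (β (p α))) = - Z (p γ (α (p β))) := by
      rw [hp α β, map_neg, map_neg]
    have nl1 : γ ⁅p α, p β⁆ = -(brP p α β (p γ)) := by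
      rw [← anchor α β]; exact hp (brP p α β) γ
    have nl1z : Z (γ ⁅p α, p β⁆) = - Z (p α (β (p γ))) + Z (β ⁅p α, p γ⁆)
        + Z (p β (α (p γ))) - Z (α ⁅p β, p γ⁆) + Z (p γ (β (p α))) := by
      rw [nl1]
      simp only [brP, LinearMap.sub_apply, lieD_apply', dR_apply', map_neg, map_sub]
      ring
    have s_al : Z (α ⁅p γ, p β⁆) = - Z (α ⁅p β, p γ⁆) := by
      rw [show ⁅p γ, p β⁆ = -⁅p β, p γ⁆ by rw [← lie_skew], map_neg, map_neg]
    have s_be : Z (β ⁅p γ, p α⁆) = - Z (β ⁅p α, p γ⁆) := by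
      rw [show ⁅p γ, p α⁆ = -⁅p α, p γ⁆ by rw [← lie_skew], map_neg, map_neg]
    have s_ga : Z (γ ⁅p β, p α⁆) = - Z (γ ⁅p α, p β⁆) := by
      rw [show ⁅p β, p α⁆ = -⁅p α, p β⁆ by rw [← lie_skew], map_neg, map_neg]
    simp only [brP, LinearMap.sub_apply, LinearMap.add_apply, LinearMap.zero_apply,
      lieD_apply', dR_apply', map_sub, map_neg, Derivation.commutator_apply, lie_lie]
    linear_combination h1 - h2 - h3 - 2 * nl1z + s_al - s_be + s_ga
  · intro α f β
    apply LinearMap.ext; intro Z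
    have hz : Z f * (β (p α)) = - Z f * (α (p β)) := by rw [hp α β]; ring
    simp only [brP, LinearMap.sub_apply, LinearMap.add_apply, LinearMap.smul_apply,
      lieD_apply', dR_apply', map_smul, lie_smul', Derivation.smul_apply, map_add,
      Derivation.leibniz, smul_eq_mul]
    have comm1 : ⁅f • p β, Z⁆ = f • ⁅p β, Z⁆ - Z f • p β := by
      rw [← lie_skew, lie_smul', ← lie_skew (p β) Z]
      module
    rw [comm1]
    simp only [map_sub, map_smul, smul_eq_mul]
    linear_combination -hz
end

section
/- Let (M,π) be a Poisson manifold and B a π-admissible closed 2-form, so that Φ_B = Id + B^♯∘π^♯ : T*M → T*M is invertible and π_B^♯ := π^♯ ∘ Φ_B^{-1} defines a bivector π_B. Then Φ_B : (T*M)_π → (T*M)_{π_B} is a Lie algebroid isomorphism: π_B^♯ ∘ Φ_B = π^♯ and Φ_B([α,β]_π) = [Φ_B α, Φ_B β]_{π_B} for all 1-forms α, β. -/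
/-!
Algebraic model of a smooth manifold `M`: `R` is its commutative `ℝ`-algebra of
smooth functions `C^∞(M)`, vector fields are derivations of `R` (with the usual
Lie bracket of vector fields given by the commutator), `1`-forms are `R`-linear
functionals on vector fields, and `2`-forms are skew-symmetric `R`-bilinear
forms on vector fields.  Exterior derivatives, Lie derivatives and interior
products are given by the usual Cartan formulas.
-/

variable {R : Type*} [CommRing R] [Algebra ℝ R]

/-- The Koszul bracket of `1`-forms for a bivector given as a plain map
`p : Ω¹(M) → 𝔛(M)` (used for the gauge-transformed bivector `π_B`). -/
def brP' (p : Form1 R → Vec R) (α β : Form1 R) : Form1 R :=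
  lieD (p α) β - lieD (p β) α - dR (β (p α))

lemma pb_dR_apply (f : R) (X : Vec R) : dR f X = X f := rfl
lemma pb_lieD_apply (X : Vec R) (β : Form1 R) (Y : Vec R) :
    lieD X β Y = X (β Y) - β ⁅X, Y⁆ := rfl
lemma pb_brP_apply (p : Form1 R →ₗ[R] Vec R) (α β : Form1 R) (Z : Vec R) :
    brP p α β Z = (p α) (β Z) - β ⁅p α, Z⁆ - ((p β) (α Z) - α ⁅p β, Z⁆) - Z (β (p α)) := by
  simp [brP, lieD, dR]

section
variable (p : Form1 R →ₗ[R] Vec R)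
  (hp : ∀ α β : Form1 R, β (p α) = - α (p β))
  (hJac : ∀ f g h : R,
    poissonBr p f (poissonBr p g h) + poissonBr p g (poissonBr p h f) +
      poissonBr p h (poissonBr p f g) = 0)

include hp in
lemma pb_key (γ : Form1 R) (h : R) : p γ h = -γ (p (dR h)) := by
  simpa [pb_dR_apply] using (hp γ (dR h))

include hp in
lemma pb_skew (f g : R) : p (dR f) g = - (p (dR g) f) := by
  simpa [pb_dR_apply] using (hp (dR f) (dR g))

include hp hJac in
lemma pb_exact_anchor (f g : R) :
    ⁅p (dR f), p (dR g)⁆ = p (dR (p (dR f) g)) := by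
  ext h
  have h1 := hJac f g h
  simp only [poissonBr] at h1
  rw [Derivation.commutator_apply]
  rw [pb_key p hp (dR (p (dR f) g)) h]
  rw [pb_dR_apply]
  rw [show p (dR f) h = -(p (dR h) f) from pb_skew p hp f h, map_neg]
  linear_combination h1

include hp hJac in
lemma pb_anchor_ex (α : Form1 R) (g : R) :
    ⁅p α, p (dR g)⁆ = p (brP p α (dR g)) := by
  ext h
  rw [pb_key p hp (brP p α (dR g)) h, pb_brP_apply]
  rw [show α (p (dR h)) = -(p α h) by simpa [pb_dR_apply] using hp (dR h) α]
  rw [pb_exact_anchor p hp hJac g h]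
  rw [show α (p (dR (p (dR g) h))) = -((dR (p (dR g) h)) (p α)) from hp _ α]
  simp only [pb_dR_apply, map_neg, Derivation.commutator_apply]
  ring

include hp hJac in
lemma pb_anchor (α β : Form1 R) : p (brP p α β) = ⁅p α, p β⁆ := by
  ext h
  rw [pb_key p hp (brP p α β) h, pb_brP_apply]
  rw [show β (p (dR h)) = -(p β h) by simpa [pb_dR_apply] using hp (dR h) β]
  rw [show α (p (dR h)) = -(p α h) by simpa [pb_dR_apply] using hp (dR h) α]
  rw [pb_anchor_ex p hp hJac α h]
  rw [show β (p (brP p α (dR h))) = -((brP p α (dR h)) (p β)) from hp _ β]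
  rw [pb_brP_apply]
  rw [show α ⁅p (dR h), p β⁆ = -(α ⁅p β, p (dR h)⁆) by rw [← lie_skew, map_neg]]
  rw [show α (p β) = -(β (p α)) from hp β α]
  simp only [pb_dR_apply, map_neg, neg_neg, Derivation.commutator_apply]
  ring

end

/-- Let `(M,π)` be a Poisson manifold and `B` a `π`-admissible closed `2`-form,
so that `Φ_B = Id + B^♯∘π^♯ : T*M → T*M` is invertible (with inverse `Ψ`) and
`π_B^♯ := π^♯ ∘ Φ_B^{-1}` defines a bivector `π_B` (which may be assumed to be
Poisson).  Then `Φ_B : (T*M)_π → (T*M)_{π_B}` is a Lie algebroid isomorphism: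
`π_B^♯ ∘ Φ_B = π^♯` and `Φ_B([α,β]_π) = [Φ_B α, Φ_B β]_{π_B}` for all `1`-forms
`α, β`. -/
theorem PhiB_algebroid_isomorphism
    (p : Form1 R →ₗ[R] Vec R)
    (hp : ∀ α β : Form1 R, β (p α) = - α (p β))
    (hJac : ∀ f g h : R,
      poissonBr p f (poissonBr p g h) + poissonBr p g (poissonBr p h f) +
        poissonBr p h (poissonBr p f g) = 0)
    (B : Vec R →ₗ[R] Form1 R) (hB : ∀ X Y : Vec R, B X Y = - B Y X)
    (hdB : ∀ X Y Z : Vec R, dCartan B X Y Z = 0)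
    -- `π`-admissibility: `Φ_B : α ↦ α + B(π^♯ α)` is invertible, with inverse `Ψ`:
    (Ψ : Form1 R → Form1 R)
    (hΨ₁ : ∀ α : Form1 R, (Ψ α) + B (p (Ψ α)) = α)
    (hΨ₂ : ∀ α : Form1 R, Ψ (α + B (p α)) = α) :
    (∀ α : Form1 R, p (Ψ (α + B (p α))) = p α) ∧
    (∀ α β : Form1 R,
        brP p α β + B (p (brP p α β)) =
          brP' (fun γ => p (Ψ γ)) (α + B (p α)) (β + B (p β))) := by
  refine ⟨fun α => by rw [hΨ₂], fun α β => ?_⟩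
  have hanch := pb_anchor p hp hJac α β
  simp only [brP']
  rw [hΨ₂, hΨ₂]
  ext Z
  rw [LinearMap.add_apply, hanch]
  simp only [LinearMap.add_apply, LinearMap.sub_apply, pb_lieD_apply, pb_dR_apply,
    pb_brP_apply, map_add]
  rw [show B (p β) ⁅p α, Z⁆ = -(B ⁅p α, Z⁆ (p β)) from hB _ _]
  rw [show B (p α) ⁅p β, Z⁆ = -(B ⁅p β, Z⁆ (p α)) from hB _ _]
  rw [show B (p β) (p α) = -(B (p α) (p β)) from hB _ _]
  have hdb := hdB (p α) (p β) Z
  simp only [dCartan] at hdb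
  simp only [map_neg, LinearMap.neg_apply]
  linear_combination -hdb
end
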